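/- Let X and Y be disjoint subsets of ι. Then every element u of the star-subalgebra of B(ℋ) generated by {v_x : x ∈ X} commutes with every element f of the star-subalgebra of B(ℋ) generated by {a_y : y ∈ Y}: u f = f u. -/

import Mathlib

/-- The fermionic Fock space over the lattice `ι`: the Hilbert space `ℓ²` of
square-summable complex families indexed by the finite subsets of `ι`. -/
noncomputable abbrev FockSpace (ι : Type*) := lp (fun _ : Finset ι => ℂ) 2

/-- The canonical orthonormal basis vector `e_X` of the Fock space. -/
noncomputable def fockBasis {ι : Type*} [DecidableEq ι] (X : Finset ι) : FockSpace ι :=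
  lp.single 2 X (1 : ℂ)

section Aux
variable {ι : Type*} [LinearOrder ι]

open ComplexConjugate

lemma fockBasis_apply (Z W : Finset ι) :
    (fockBasis Z : ∀ _ : Finset ι, ℂ) W = if W = Z then 1 else 0 := by
  rw [fockBasis, lp.single_apply]
  split <;> simp_all

lemma fock_clm_ext {T S : FockSpace ι →L[ℂ] FockSpace ι}
    (h : ∀ Z : Finset ι, T (fockBasis Z) = S (fockBasis Z)) : T = S := by
  refine ContinuousLinearMap.ext fun g => ?_
  have hg : HasSum (fun Z : Finset ι => lp.single 2 Z (g Z)) g :=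
    lp.hasSum_single ENNReal.ofNat_ne_top g
  have key : ∀ Z : Finset ι, (lp.single 2 Z (g Z) : FockSpace ι) = g Z • fockBasis Z := by
    intro Z
    rw [fockBasis, ← lp.single_smul, smul_eq_mul, mul_one]
  have h1 : HasSum (fun Z : Finset ι => g Z • T (fockBasis Z)) (T g) := by
    simpa only [key, map_smul] using hg.mapL T
  have h2 : HasSum (fun Z : Finset ι => g Z • T (fockBasis Z)) (S g) := by
    simpa only [key, map_smul, h] using hg.mapL S
  exact h1.unique h2

lemma inner_fockBasis_left (Z : Finset ι) (v : FockSpace ι) :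
    (inner ℂ (fockBasis Z) v : ℂ) = (v : ∀ _ : Finset ι, ℂ) Z := by
  rw [fockBasis, lp.inner_single_left]
  simp [RCLike.inner_apply]

lemma star_apply_coord (T : FockSpace ι →L[ℂ] FockSpace ι) (u : FockSpace ι) (Z : Finset ι) :
    ((star T) u : ∀ _ : Finset ι, ℂ) Z = (inner ℂ (T (fockBasis Z)) u : ℂ) := by
  rw [← inner_fockBasis_left, ContinuousLinearMap.star_eq_adjoint,
    ContinuousLinearMap.adjoint_inner_right]

end Aux

section Aux2
variable {ι : Type*} [LinearOrder ι]

lemma sign_filter_erase (x y : ι) {Z : Finset ι} (hy : y ∈ Z) :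
    ((-1:ℂ) ^ ((Z.erase y).filter (fun z => z < x)).card) =
      (if y < x then -1 else 1) * (-1:ℂ) ^ ((Z.filter (fun z => z < x)).card) := by
  rw [Finset.filter_erase]
  by_cases hyx : y < x
  · have hy' : y ∈ Z.filter (fun z => z < x) := Finset.mem_filter.2 ⟨hy, hyx⟩
    rw [if_pos hyx, ← Finset.card_erase_add_one hy', pow_succ]
    ring
  · rw [Finset.erase_eq_of_notMem, if_neg hyx, one_mul]
    simp [hyx]

lemma sign_filter_insert (x y : ι) {Z : Finset ι} (hy : y ∉ Z) :
    ((-1:ℂ) ^ (((insert y Z).filter (fun z => z < x)).card) : ℂ) =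
      (if y < x then -1 else 1) * (-1:ℂ) ^ ((Z.filter (fun z => z < x)).card) := by
  rw [Finset.filter_insert]
  by_cases hyx : y < x
  · have hy' : y ∉ Z.filter (fun z => z < x) := fun h => hy (Finset.mem_filter.1 h).1
    rw [if_pos hyx, if_pos hyx, Finset.card_insert_of_notMem hy', pow_succ]
    ring
  · rw [if_neg hyx, if_neg hyx, one_mul]

variable (a : ι → (FockSpace ι →L[ℂ] FockSpace ι))
    (ha : ∀ (x : ι) (X : Finset ι),
      a x (fockBasis X) =
        if x ∈ X then
          ((-1 : ℂ) ^ (X.filter (fun y => y < x)).card) • fockBasis (X.erase x)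
        else 0)

include ha in
lemma a_star_apply (x : ι) (Z : Finset ι) :
    (star (a x)) (fockBasis Z) =
      if x ∈ Z then 0
      else ((-1 : ℂ) ^ (Z.filter (fun y => y < x)).card) • fockBasis (insert x Z) := by
  apply lp.ext
  funext W
  rw [star_apply_coord, ha x W]
  by_cases hxZ : x ∈ Z
  · rw [if_pos hxZ]
    by_cases hxW : x ∈ W
    · rw [if_pos hxW, inner_smul_left, fockBasis, lp.inner_single_left]
      have : (W.erase x) ≠ Z := by
        intro h
        rw [← h] at hxZ
        exact Finset.notMem_erase x W hxZ
      simp [RCLike.inner_apply, fockBasis_apply, this, lp.coeFn_zero]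
    · rw [if_neg hxW]
      simp [lp.coeFn_zero]
  · rw [if_neg hxZ]
    by_cases hW : W = insert x Z
    · subst hW
      have hxW : x ∈ insert x Z := Finset.mem_insert_self x Z
      rw [if_pos hxW, inner_smul_left, fockBasis, lp.inner_single_left,
        Finset.erase_insert hxZ]
      have hfil : (insert x Z).filter (fun y => y < x) = Z.filter (fun y => y < x) := by
        rw [Finset.filter_insert, if_neg (lt_irrefl x)]
      simp [RCLike.inner_apply, fockBasis_apply, hfil, lp.coeFn_smul]
    · by_cases hxW : x ∈ W
      · rw [if_pos hxW, inner_smul_left, fockBasis, lp.inner_single_left]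
        have : (W.erase x) ≠ Z := by
          intro h
          exact hW (by rw [← h, Finset.insert_erase hxW])
        simp [RCLike.inner_apply, fockBasis_apply, this, lp.coeFn_smul, fockBasis, lp.single_apply, hW]
      · rw [if_neg hxW]
        simp [lp.coeFn_zero, lp.coeFn_smul, fockBasis_apply, hW]

end Aux2

section Aux3
variable {ι : Type*} [LinearOrder ι]
variable (a : ι → (FockSpace ι →L[ℂ] FockSpace ι))
    (ha : ∀ (x : ι) (X : Finset ι),
      a x (fockBasis X) =
        if x ∈ X then
          ((-1 : ℂ) ^ (X.filter (fun y => y < x)).card) • fockBasis (X.erase x)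
        else 0)
    (w : FockSpace ι →L[ℂ] FockSpace ι)
    (hw : ∀ X : Finset ι, w (fockBasis X) = ((-1 : ℂ) ^ X.card) • fockBasis X)

include hw in
lemma w_star : star w = w := by
  apply fock_clm_ext
  intro Z
  apply lp.ext
  funext W
  rw [star_apply_coord, hw W, hw Z, inner_smul_left, fockBasis, lp.inner_single_left]
  by_cases hWZ : W = Z
  · subst hWZ
    simp [RCLike.inner_apply, fockBasis_apply, lp.coeFn_smul]
  · simp [RCLike.inner_apply, fockBasis_apply, lp.coeFn_smul, hWZ]

include ha hw in
lemma w_anti (y : ι) : w * a y = -(a y * w) := by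
  apply fock_clm_ext
  intro Z
  rw [ContinuousLinearMap.mul_apply, ContinuousLinearMap.neg_apply,
    ContinuousLinearMap.mul_apply, ha y Z, hw Z]
  by_cases hy : y ∈ Z
  · rw [if_pos hy, map_smul, map_smul, hw, ha y Z, if_pos hy,
      ← Finset.card_erase_add_one hy, pow_succ]
    rw [smul_smul, smul_smul, ← neg_smul]
    congr 1
    ring
  · rw [if_neg hy, map_smul, ha y Z, if_neg hy]
    simp

include ha in
lemma a_anti {x y : ι} (hxy : x ≠ y) : a x * a y = -(a y * a x) := by
  apply fock_clm_ext
  intro Z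
  rw [ContinuousLinearMap.mul_apply, ContinuousLinearMap.neg_apply,
    ContinuousLinearMap.mul_apply, ha y Z, ha x Z]
  by_cases hy : y ∈ Z
  · rw [if_pos hy, map_smul, ha x (Z.erase y)]
    by_cases hx : x ∈ Z
    · have hx' : x ∈ Z.erase y := Finset.mem_erase.2 ⟨hxy, hx⟩
      have hy' : y ∈ Z.erase x := Finset.mem_erase.2 ⟨Ne.symm hxy, hy⟩
      rw [if_pos hx', if_pos hx, map_smul, ha y (Z.erase x), if_pos hy',
        Finset.erase_right_comm, sign_filter_erase x y hy, sign_filter_erase y x hx,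
        smul_smul, smul_smul, ← neg_smul]
      congr 1
      rcases hxy.lt_or_gt with h | h
      · rw [if_pos h, if_neg (asymm h)]; ring
      · rw [if_neg (asymm h), if_pos h]; ring
    · rw [if_neg (fun h => hx (Finset.mem_of_mem_erase h)), if_neg hx]
      simp
  · rw [if_neg hy]
    by_cases hx : x ∈ Z
    · rw [if_pos hx, map_smul, ha y (Z.erase x),
        if_neg (fun h => hy (Finset.mem_of_mem_erase h))]
      simp
    · rw [if_neg hx]
      simp

include ha in
lemma a_astar_anti {x y : ι} (hxy : x ≠ y) : a x * star (a y) = -(star (a y) * a x) := by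
  apply fock_clm_ext
  intro Z
  rw [ContinuousLinearMap.mul_apply, ContinuousLinearMap.neg_apply,
    ContinuousLinearMap.mul_apply, a_star_apply a ha y Z, ha x Z]
  by_cases hy : y ∈ Z
  · rw [if_pos hy]
    by_cases hx : x ∈ Z
    · rw [if_pos hx, map_zero, map_smul, a_star_apply a ha y (Z.erase x),
        if_pos (Finset.mem_erase.2 ⟨Ne.symm hxy, hy⟩)]
      simp
    · rw [if_neg hx, map_zero]
      simp
  · rw [if_neg hy, map_smul, ha x (insert y Z)]
    by_cases hx : x ∈ Z
    · have hx' : x ∈ insert y Z := Finset.mem_insert_of_mem hx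
      rw [if_pos hx', if_pos hx, map_smul, a_star_apply a ha y (Z.erase x),
        if_neg (fun h => hy (Finset.mem_of_mem_erase h)),
        Finset.erase_insert_of_ne (Ne.symm hxy),
        sign_filter_insert x y hy, sign_filter_erase y x hx,
        smul_smul, smul_smul, ← neg_smul]
      congr 1
      rcases hxy.lt_or_gt with h | h
      · rw [if_pos h, if_neg (asymm h)]; ring
      · rw [if_neg (asymm h), if_pos h]; ring
    · have hx' : x ∉ insert y Z := by
        simp [Finset.mem_insert, hxy, hx]
      rw [if_neg hx', if_neg hx]
      simp

include ha hw in
lemma w_astar_anti (y : ι) : w * star (a y) = -(star (a y) * w) := by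
  have h := congrArg star (w_anti a ha w hw y)
  rw [star_mul, star_neg, star_mul, w_star w hw] at h
  rw [h, neg_neg]

include ha hw in
lemma v_comm_a {x y : ι} (hxy : x ≠ y) : (w * a x) * a y = a y * (w * a x) := by
  calc (w * a x) * a y = w * (a x * a y) := by rw [mul_assoc]
    _ = -(w * a y) * a x := by rw [a_anti a ha hxy, mul_neg, neg_mul, mul_assoc]
    _ = (a y * w) * a x := by rw [w_anti a ha w hw y, neg_neg]
    _ = a y * (w * a x) := by rw [mul_assoc]

include ha hw in
lemma v_comm_astar {x y : ι} (hxy : x ≠ y) :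
    (w * a x) * star (a y) = star (a y) * (w * a x) := by
  calc (w * a x) * star (a y) = w * (a x * star (a y)) := by rw [mul_assoc]
    _ = -(w * star (a y)) * a x := by rw [a_astar_anti a ha hxy, mul_neg, neg_mul, mul_assoc]
    _ = (star (a y) * w) * a x := by rw [w_astar_anti a ha w hw y, neg_neg]
    _ = star (a y) * (w * a x) := by rw [mul_assoc]

end Aux3

/-- If `X` and `Y` are disjoint subsets of the lattice, every element of the
star-subalgebra generated by `{v_x := w a_x : x ∈ X}` commutes with every element of the
star-subalgebra generated by `{a_y : y ∈ Y}`. -/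
theorem v_algebra_commutes_with_a_algebra {ι : Type*} [LinearOrder ι]
    (a : ι → (FockSpace ι →L[ℂ] FockSpace ι))
    (ha : ∀ (x : ι) (X : Finset ι),
      a x (fockBasis X) =
        if x ∈ X then
          ((-1 : ℂ) ^ (X.filter (fun y => y < x)).card) • fockBasis (X.erase x)
        else 0)
    (w : FockSpace ι →L[ℂ] FockSpace ι)
    (hw : ∀ X : Finset ι, w (fockBasis X) = ((-1 : ℂ) ^ X.card) • fockBasis X)
    (X Y : Set ι) (hXY : Disjoint X Y)
    (u f : FockSpace ι →L[ℂ] FockSpace ι)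
    (hu : u ∈ StarAlgebra.adjoin ℂ ((fun x => w * a x) '' X))
    (hf : f ∈ StarAlgebra.adjoin ℂ (a '' Y)) :
    u * f = f * u := by
  have hfC : f ∈ StarSubalgebra.centralizer ℂ ((fun x => w * a x) '' X) := by
    refine StarAlgebra.adjoin_le ?_ hf
    rintro _ ⟨y, hy, rfl⟩
    rw [SetLike.mem_coe, StarSubalgebra.mem_centralizer_iff]
    rintro _ ⟨x, hx, rfl⟩
    have hxy : x ≠ y := fun h => Set.disjoint_left.1 hXY hx (h ▸ hy)
    refine ⟨v_comm_a a ha w hw hxy, ?_⟩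
    have h := congrArg star (v_comm_astar a ha w hw hxy)
    simp only [star_mul, star_star, mul_assoc] at h
    show star (w * a x) * a y = a y * star (w * a x)
    simp only [star_mul, mul_assoc]
    exact h.symm
  have huf : u ∈ StarSubalgebra.centralizer ℂ ({f} : Set _) := by
    refine StarAlgebra.adjoin_le ?_ hu
    intro g hg
    rw [SetLike.mem_coe, StarSubalgebra.mem_centralizer_iff]
    intro g' hg'
    rcases (StarSubalgebra.mem_centralizer_iff ℂ).1 hfC g hg with ⟨h1, h2⟩
    rcases Set.mem_singleton_iff.1 hg' with rfl
    refine ⟨h1.symm, ?_⟩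
    have h3 := congrArg star h2
    rwa [star_mul, star_mul, star_star] at h3
  rcases (StarSubalgebra.mem_centralizer_iff ℂ).1 huf f (Set.mem_singleton f) with ⟨h1, _⟩
  exact h1.symm
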